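/- In the biquandle ℤ² with operations (x,a) ub (y,b) = (x,a) ob (y,b) = (x+1, a+y) (so the inverse operations are (x,a) ub⁻¹ (y,b) = (x,a) ob⁻¹ (y,b) = (x−1, a−y)), the element (0,0) generates the whole biquandle: the smallest subset of ℤ² containing (0,0) and closed under the operations ub, ob, ub⁻¹, ob⁻¹ is all of ℤ². -/

import Mathlib

/-- In the biquandle `ℤ²` with
`(x,a) ub (y,b) = (x,a) ob (y,b) = (x+1, a+y)` (whose inverse operations are
`(x,a) ub⁻¹ (y,b) = (x,a) ob⁻¹ (y,b) = (x−1, a−y)`), the element `(0,0)` generates the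
whole biquandle: the smallest subset containing `(0,0)` and closed under
`ub, ob, ub⁻¹, ob⁻¹` is all of `ℤ²`. -/
theorem int2_generated_by_zero (S : Set (ℤ × ℤ))
    (h0 : ((0, 0) : ℤ × ℤ) ∈ S)
    (hub : ∀ p ∈ S, ∀ r ∈ S, ((p.1 + 1, p.2 + r.1) : ℤ × ℤ) ∈ S)
    (hob : ∀ p ∈ S, ∀ r ∈ S, ((p.1 + 1, p.2 + r.1) : ℤ × ℤ) ∈ S)
    (hubinv : ∀ p ∈ S, ∀ r ∈ S, ((p.1 - 1, p.2 - r.1) : ℤ × ℤ) ∈ S)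
    (hobinv : ∀ p ∈ S, ∀ r ∈ S, ((p.1 - 1, p.2 - r.1) : ℤ × ℤ) ∈ S) :
    S = Set.univ := by
  have hn : ∀ n : ℤ, ((n, 0) : ℤ × ℤ) ∈ S := by
    intro n
    induction n using Int.induction_on with
    | zero => exact h0
    | succ k ih => simpa using hub (k, 0) ih (0, 0) h0
    | pred k ih => simpa using hubinv (-k, 0) ih (0, 0) h0
  ext ⟨x, a⟩
  simp only [Set.mem_univ, iff_true]
  simpa using hub (x - 1, 0) (hn _) (a, 0) (hn _)
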